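/- (Global optimality from the subdifferential.) Let f, g, h, I, C, Ψ be as above and suppose the zero vector belongs to conv{s_t(a,b)·∇σ_t(a,b) : t ∈ A⁺(a,b) ∪ A⁻(a,b)}, where s_t(a,b) = 1 for t ∈ A⁺(a,b) and s_t(a,b) = −1 for t ∈ A⁻(a,b). Then (a,b) is a global minimizer of Ψ over C. -/

import Mathlib

open RealInnerProductSpace

/-- Global optimality from the subdifferential: if the zero vector belongs to the convex
hull of the (signed) gradients at the active points, then (a,b) is a global minimiser of
the maximal deviation over the feasible set. -/
theorem global_optimality_from_subdifferential
    (n m : ℕ) (f : ℝ → ℝ) (hf : Continuous f)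
    (I : Set ℝ) (hI : IsCompact I) (hIne : I.Nonempty)
    (g : ℝ → EuclideanSpace ℝ (Fin (n + 1))) (hg : ContinuousOn g I)
    (h : ℝ → EuclideanSpace ℝ (Fin (m + 1))) (hh : ContinuousOn h I)
    (C : Set (EuclideanSpace ℝ (Fin (n + 1)) × EuclideanSpace ℝ (Fin (m + 1))))
    (hC : C = {p | ∀ t ∈ I, 1 ≤ ⟪p.2, h t⟫})
    (Ψ : (EuclideanSpace ℝ (Fin (n + 1)) × EuclideanSpace ℝ (Fin (m + 1))) → ℝ)
    (hΨ : ∀ p, Ψ p = ⨆ t : I, |f t - ⟪p.1, g t⟫ / ⟪p.2, h t⟫|)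
    (a : EuclideanSpace ℝ (Fin (n + 1))) (b : EuclideanSpace ℝ (Fin (m + 1)))
    (hab : (a, b) ∈ C)
    (σ : ℝ → ℝ) (hσ : ∀ t, σ t = f t - ⟪a, g t⟫ / ⟪b, h t⟫)
    (Aplus Aminus : Set ℝ)
    (hAplus : Aplus = {t ∈ I | σ t = Ψ (a, b)})
    (hAminus : Aminus = {t ∈ I | -σ t = Ψ (a, b)})
    (st : ℝ → ℝ)
    (hst : (∀ t ∈ Aplus, st t = 1) ∧ ∀ t ∈ Aminus, st t = -1)
    (grad : ℝ → EuclideanSpace ℝ (Fin (n + 1)) × EuclideanSpace ℝ (Fin (m + 1)))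
    (hgrad : ∀ t, grad t =
      (⟪b, h t⟫ ^ 2)⁻¹ • (-⟪b, h t⟫ • g t, ⟪a, g t⟫ • h t))
    (hzero : (0 : EuclideanSpace ℝ (Fin (n + 1)) × EuclideanSpace ℝ (Fin (m + 1))) ∈
      convexHull ℝ ((fun t => st t • grad t) '' (Aplus ∪ Aminus))) :
    ∀ q ∈ C, Ψ (a, b) ≤ Ψ q := by
  intro q hq
  by_contra hlt
  push_neg at hlt
  rw [hC] at hab hq
  have hq2 : ∀ t ∈ I, (1:ℝ) ≤ ⟪q.2, h t⟫ := hq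
  have hb2 : ∀ t ∈ I, (1:ℝ) ≤ ⟪b, h t⟫ := hab
  have hcont : ContinuousOn (fun t => |f t - ⟪q.1, g t⟫ / ⟪q.2, h t⟫|) I := by
    apply ContinuousOn.abs
    apply ContinuousOn.sub hf.continuousOn
    apply ContinuousOn.div
    · exact continuousOn_const.inner hg
    · exact continuousOn_const.inner hh
    · intro t ht
      exact ne_of_gt (lt_of_lt_of_le one_pos (hq2 t ht))
  have hbdd : BddAbove (Set.range fun t : I => |f t - ⟪q.1, g t⟫ / ⟪q.2, h t⟫|) := by
    obtain ⟨M, hM⟩ := (hI.image_of_continuousOn hcont).bddAbove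
    exact ⟨M, by rintro x ⟨t, rfl⟩; exact hM ⟨t, t.2, rfl⟩⟩
  have hle : ∀ t ∈ I, |f t - ⟪q.1, g t⟫ / ⟪q.2, h t⟫| ≤ Ψ q := by
    intro t ht
    rw [hΨ]
    exact le_ciSup hbdd ⟨t, ht⟩
  set L : EuclideanSpace ℝ (Fin (n + 1)) × EuclideanSpace ℝ (Fin (m + 1)) → ℝ :=
    fun v => ⟪q.1 - a, v.1⟫ + ⟪q.2 - b, v.2⟫ with hL
  have hLlin : IsLinearMap ℝ L := by
    constructor
    · intro v w
      simp only [hL, Prod.fst_add, Prod.snd_add, inner_add_right]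
      ring
    · intro c v
      simp only [hL, Prod.smul_fst, Prod.smul_snd, real_inner_smul_right, smul_eq_mul]
      ring
  have hS : (fun t => st t • grad t) '' (Aplus ∪ Aminus) ⊆ {v | L v < 0} := by
    rintro v ⟨t, ht, rfl⟩
    have htI : t ∈ I := by
      rcases ht with ht | ht
      · rw [hAplus] at ht; exact ht.1
      · rw [hAminus] at ht; exact ht.1
    have hr : (1:ℝ) ≤ ⟪b, h t⟫ := hb2 t htI
    have hr' : (1:ℝ) ≤ ⟪q.2, h t⟫ := hq2 t htI
    have hrpos : (0:ℝ) < ⟪b, h t⟫ := lt_of_lt_of_le one_pos hr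
    have hr'pos : (0:ℝ) < ⟪q.2, h t⟫ := lt_of_lt_of_le one_pos hr'
    have hgv : L (st t • grad t)
        = st t * ((⟪b, h t⟫ ^ 2)⁻¹ *
          (⟪a, g t⟫ * ⟪q.2, h t⟫ - ⟪q.1, g t⟫ * ⟪b, h t⟫)) := by
      rw [hLlin.map_smul, hgrad]
      simp only [hL, Prod.smul_fst, Prod.smul_snd, real_inner_smul_right,
        inner_sub_left, smul_eq_mul]
      ring
    have hinv : (0:ℝ) < (⟪b, h t⟫ ^ 2)⁻¹ := by positivity
    show L (st t • grad t) < 0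
    rcases ht with ht | ht
    · have hst1 : st t = 1 := hst.1 t ht
      rw [hAplus] at ht
      have hσt : f t - ⟪a, g t⟫ / ⟪b, h t⟫ = Ψ (a, b) := by rw [← hσ]; exact ht.2
      have h1 : f t - ⟪q.1, g t⟫ / ⟪q.2, h t⟫ ≤ Ψ q :=
        le_trans (le_abs_self _) (hle t htI)
      have key : ⟪a, g t⟫ / ⟪b, h t⟫ < ⟪q.1, g t⟫ / ⟪q.2, h t⟫ := by
        have h2 : f t - ⟪q.1, g t⟫ / ⟪q.2, h t⟫ < f t - ⟪a, g t⟫ / ⟪b, h t⟫ := by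
          rw [hσt]; exact lt_of_le_of_lt h1 hlt
        linarith
      have key2 : ⟪a, g t⟫ * ⟪q.2, h t⟫ < ⟪q.1, g t⟫ * ⟪b, h t⟫ :=
        (div_lt_div_iff₀ hrpos hr'pos).mp key
      rw [hgv, hst1, one_mul]
      exact mul_neg_of_pos_of_neg hinv (by linarith)
    · have hst1 : st t = -1 := hst.2 t ht
      rw [hAminus] at ht
      have hσt : -(f t - ⟪a, g t⟫ / ⟪b, h t⟫) = Ψ (a, b) := by rw [← hσ]; exact ht.2
      have h1 : -(f t - ⟪q.1, g t⟫ / ⟪q.2, h t⟫) ≤ Ψ q :=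
        le_trans (neg_le_abs _) (hle t htI)
      have key : ⟪q.1, g t⟫ / ⟪q.2, h t⟫ < ⟪a, g t⟫ / ⟪b, h t⟫ := by
        have h2 : -(f t - ⟪q.1, g t⟫ / ⟪q.2, h t⟫) < -(f t - ⟪a, g t⟫ / ⟪b, h t⟫) := by
          rw [hσt]; exact lt_of_le_of_lt h1 hlt
        linarith
      have key2 : ⟪q.1, g t⟫ * ⟪b, h t⟫ < ⟪a, g t⟫ * ⟪q.2, h t⟫ :=
        (div_lt_div_iff₀ hr'pos hrpos).mp key
      rw [hgv, hst1]
      have hpos : (0:ℝ) < (⟪b, h t⟫ ^ 2)⁻¹ *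
          (⟪a, g t⟫ * ⟪q.2, h t⟫ - ⟪q.1, g t⟫ * ⟪b, h t⟫) :=
        mul_pos hinv (by linarith)
      linarith
  have h0 := convexHull_min hS (convex_halfSpace_lt hLlin 0) hzero
  simp only [hL, Set.mem_setOf_eq, Prod.fst_zero, Prod.snd_zero, inner_zero_right,
    add_zero] at h0
  exact lt_irrefl 0 h0
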